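/- Every u ∈ S^m (fuzzy star-shaped number with compact support) is p-mean left-continuous: for every ε > 0 there exists δ > 0 such that for all 0 ≤ h < δ, (∫_h¹ H([u]_α, [u]_{α−h})^p dα)^{1/p} < ε. -/

import Mathlib

open Set Metric MeasureTheory Filter

def cut {m : ℕ} (u : EuclideanSpace ℝ (Fin m) → ℝ) (α : ℝ) :
    Set (EuclideanSpace ℝ (Fin m)) := {x | α ≤ u x}

/-- `u` is a fuzzy star-shaped number with compact support (`u ∈ Sᵐ`). -/
def IsFSN {m : ℕ} (u : EuclideanSpace ℝ (Fin m) → ℝ) : Prop :=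
  (∀ x, u x ∈ Set.Icc (0:ℝ) 1) ∧ (∃ x, u x = 1) ∧ UpperSemicontinuous u ∧
  (∀ α ∈ Set.Ioc (0:ℝ) 1, ∃ x ∈ cut u α, StarConvex ℝ x (cut u α)) ∧
  IsCompact (closure {x | 0 < u x})

section Aux

variable {m : ℕ} {u : EuclideanSpace ℝ (Fin m) → ℝ}

lemma cut_anti {β γ : ℝ} (h : β ≤ γ) : cut u γ ⊆ cut u β :=
  fun _ hx => le_trans h hx

lemma cut_nonempty (hu : IsFSN u) {t : ℝ} (ht : t ≤ 1) : (cut u t).Nonempty := by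
  obtain ⟨x, hx⟩ := hu.2.1
  exact ⟨x, by simp only [cut, mem_setOf_eq, hx]; exact ht⟩

lemma cut_subset (hu : IsFSN u) {t : ℝ} (ht : 0 < t) :
    cut u t ⊆ closure {x | 0 < u x} :=
  fun _ hx => subset_closure (lt_of_lt_of_le ht hx)

lemma cut_isCompact (hu : IsFSN u) {t : ℝ} (ht : 0 < t) : IsCompact (cut u t) :=
  hu.2.2.2.2.of_isClosed_subset (hu.2.2.1.isClosed_preimage t) (cut_subset hu ht)

lemma cut_edist_ne_top (hu : IsFSN u) {s t : ℝ} (hs : 0 < s) (hs1 : s ≤ 1)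
    (ht : 0 < t) (ht1 : t ≤ 1) :
    EMetric.hausdorffEdist (cut u s) (cut u t) ≠ ⊤ :=
  hausdorffEdist_ne_top_of_nonempty_of_bounded (cut_nonempty hu hs1) (cut_nonempty hu ht1)
    (cut_isCompact hu hs).isBounded (cut_isCompact hu ht).isBounded

lemma cut_hd_le_diam (hu : IsFSN u) {s t : ℝ} (hs : 0 < s) (hs1 : s ≤ 1)
    (ht : 0 < t) (ht1 : t ≤ 1) :
    hausdorffDist (cut u s) (cut u t) ≤ diam (closure {x | 0 < u x}) := by
  refine le_trans (hausdorffDist_le_diam (cut_nonempty hu hs1) (cut_isCompact hu hs).isBounded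
    (cut_nonempty hu ht1) (cut_isCompact hu ht).isBounded) ?_
  exact diam_mono (union_subset (cut_subset hu hs) (cut_subset hu ht)) hu.2.2.2.2.isBounded

lemma hd_cut_mono (hu : IsFSN u) {a b c : ℝ} (hc : 0 < c) (hcb : c ≤ b) (hba : b ≤ a)
    (ha1 : a ≤ 1) :
    hausdorffDist (cut u a) (cut u b) ≤ hausdorffDist (cut u a) (cut u c) := by
  have ha : 0 < a := lt_of_lt_of_le (lt_of_lt_of_le hc hcb) hba
  apply hausdorffDist_le_of_infDist hausdorffDist_nonneg
  · intro x hx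
    rw [infDist_zero_of_mem (cut_anti hba hx)]
    exact hausdorffDist_nonneg
  · intro x hx
    have hxc : x ∈ cut u c := cut_anti hcb hx
    calc infDist x (cut u a) ≤ hausdorffDist (cut u c) (cut u a) :=
          infDist_le_hausdorffDist_of_mem hxc
            (cut_edist_ne_top hu hc (hcb.trans (hba.trans ha1)) ha ha1)
      _ = hausdorffDist (cut u a) (cut u c) := hausdorffDist_comm ..

lemma hd_le_ciSup {A B : Set (EuclideanSpace ℝ (Fin m))} (hA : A.Nonempty) (hB : Bornology.IsBounded B)
    (hAB : A ⊆ B) {e : ℕ → EuclideanSpace ℝ (Fin m)} (he : DenseRange e) :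
    hausdorffDist A B ≤ max (⨆ k, (infDist (e k) A - infDist (e k) B)) 0 := by
  have hBne : B.Nonempty := hA.mono hAB
  have hfin : EMetric.hausdorffEdist B A ≠ ⊤ :=
    hausdorffEdist_ne_top_of_nonempty_of_bounded hBne hA hB (hB.subset hAB)
  have hbdd : BddAbove (Set.range fun k => infDist (e k) A - infDist (e k) B) := by
    refine ⟨hausdorffDist B A, ?_⟩
    rintro _ ⟨k, rfl⟩
    have := infDist_le_infDist_add_hausdorffDist (x := e k) (s := B) (t := A) hfin
    dsimp only
    linarith
  apply hausdorffDist_le_of_infDist (le_max_right _ _)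
  · intro x hx
    rw [infDist_zero_of_mem (hAB hx)]
    exact le_max_right _ _
  · intro x hx
    refine le_trans ?_ (le_max_left _ _)
    refine le_of_forall_pos_le_add fun ε hε => ?_
    obtain ⟨k, hk⟩ := Metric.denseRange_iff.1 he x (ε/2) (by linarith)
    have h1 : infDist x A ≤ infDist (e k) A + dist x (e k) := infDist_le_infDist_add_dist
    have h2 : infDist (e k) B ≤ dist (e k) x := infDist_le_dist_of_mem hx
    have h3 : infDist (e k) A - infDist (e k) B
        ≤ ⨆ k, (infDist (e k) A - infDist (e k) B) := le_ciSup hbdd k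
    have h4 : dist (e k) x = dist x (e k) := dist_comm _ _
    linarith

lemma ciSup_le_hd {A B : Set (EuclideanSpace ℝ (Fin m))}
    (hfin : EMetric.hausdorffEdist B A ≠ ⊤) (e : ℕ → EuclideanSpace ℝ (Fin m)) :
    (⨆ k, (infDist (e k) A - infDist (e k) B)) ≤ hausdorffDist A B := by
  rw [hausdorffDist_comm]
  refine ciSup_le fun k => ?_
  have := infDist_le_infDist_add_hausdorffDist (x := e k) (s := B) (t := A) hfin
  linarith

lemma cut_left_cont (hu : IsFSN u) {a : ℝ} (ha : 0 < a) (ha1 : a ≤ 1) {ε : ℝ} (hε : 0 < ε) :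
    ∃ b, 0 < b ∧ b < a ∧ hausdorffDist (cut u a) (cut u b) < ε := by
  set U := thickening (ε/2) (cut u a) with hU
  set ℓ : ℕ → ℝ := fun n => a - a / (n+2) with hℓ
  have hℓpos : ∀ n : ℕ, 0 < ℓ n := by
    intro n
    have h2 : (0:ℝ) < (n:ℝ) + 2 := by positivity
    have : a / (n+2) < a := by
      rw [div_lt_iff₀ h2]
      nlinarith
    simpa [hℓ] using sub_pos.2 this
  have hℓlt : ∀ n : ℕ, ℓ n < a := by
    intro n
    have h2 : (0:ℝ) < (n:ℝ) + 2 := by positivity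
    have : 0 < a / (n+2) := by positivity
    simp only [hℓ]; linarith
  have hℓmono : Monotone ℓ := by
    intro i j hij
    have hi : (0:ℝ) < (i:ℝ) + 2 := by positivity
    have hij' : (i:ℝ) + 2 ≤ (j:ℝ) + 2 := by
      have : (i:ℝ) ≤ j := Nat.cast_le.2 hij
      linarith
    have := div_le_div_of_nonneg_left ha.le hi hij'
    simp only [hℓ]; linarith [this]
  set t : ℕ → Set (EuclideanSpace ℝ (Fin m)) := fun n => cut u (ℓ n) ∩ Uᶜ with ht
  by_cases hall : ∀ n, (t n).Nonempty
  · exfalso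
    have htanti : ∀ i j : ℕ, i ≤ j → t j ⊆ t i := fun i j hij =>
      inter_subset_inter (cut_anti (hℓmono hij)) subset_rfl
    have hdir : Directed (· ⊇ ·) t := fun i j =>
      ⟨max i j, htanti i _ (le_max_left _ _), htanti j _ (le_max_right _ _)⟩
    have hcpt : ∀ n, IsCompact (t n) := fun n =>
      (cut_isCompact hu (hℓpos n)).inter_right isOpen_thickening.isClosed_compl
    have hcl : ∀ n, IsClosed (t n) := fun n =>
      ((hu.2.2.1.isClosed_preimage (ℓ n)).inter isOpen_thickening.isClosed_compl)
    obtain ⟨x, hx⟩ := IsCompact.nonempty_iInter_of_directed_nonempty_isCompact_isClosed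
      t hdir hall hcpt hcl
    simp only [mem_iInter, ht, mem_inter_iff] at hx
    have hxa : x ∈ cut u a := by
      by_contra hxa
      have hua : u x < a := lt_of_not_ge hxa
      obtain ⟨n, hn⟩ := exists_nat_gt (a / (a - u x))
      have hpos : 0 < a - u x := by linarith
      have h2 : (0:ℝ) < (n:ℝ) + 2 := by positivity
      have : a / (n+2) < a - u x := by
        rw [div_lt_iff₀ h2]
        have := (div_lt_iff₀ hpos).1 (hn.trans_le (by linarith : (n:ℝ) ≤ (n:ℝ) + 2))
        linarith
      have hx' : ℓ n ≤ u x := (hx n).1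
      simp only [hℓ] at hx'
      linarith
    exact (hx 0).2 (self_subset_thickening (by linarith) _ hxa)
  · push_neg at hall
    obtain ⟨n, hn⟩ := hall
    have hsub : cut u (ℓ n) ⊆ U := by
      intro x hx
      by_contra hxU
      exact absurd hn (Set.nonempty_iff_ne_empty.1 ⟨x, hx, hxU⟩)
    refine ⟨ℓ n, hℓpos n, hℓlt n, ?_⟩
    have : hausdorffDist (cut u a) (cut u (ℓ n)) ≤ ε/2 := by
      apply hausdorffDist_le_of_infDist (by linarith)
      · intro x hx
        rw [infDist_zero_of_mem (cut_anti (hℓlt n).le hx)]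
        linarith
      · intro x hx
        obtain ⟨z, hz, hdz⟩ := mem_thickening_iff.1 (hsub hx)
        exact le_trans (infDist_le_dist_of_mem hz) hdz.le
    linarith

end Aux

section AuxG

variable {m : ℕ} {u : EuclideanSpace ℝ (Fin m) → ℝ}

/-- approximating lower level. -/
noncomputable def auxψ (n : ℕ) (α : ℝ) : ℝ := max (α - 1/(n+1)) (α/2)

/-- measurable majorant. -/
noncomputable def auxG (u : EuclideanSpace ℝ (Fin m) → ℝ)
    (e : ℕ → EuclideanSpace ℝ (Fin m)) (n : ℕ) (α : ℝ) : ℝ :=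
  max (⨆ k, (infDist (e k) (cut u (min α 1)) - infDist (e k) (cut u (min (auxψ n α) 1)))) 0

lemma auxψ_lt {n : ℕ} {α : ℝ} (hα : 0 < α) : auxψ n α < α := by
  have h1 : (0:ℝ) < 1/((n:ℝ)+1) := by positivity
  exact max_lt (by linarith) (by linarith)

lemma auxψ_pos {n : ℕ} {α : ℝ} (hα : 0 < α) : 0 < auxψ n α :=
  lt_of_lt_of_le (by linarith : (0:ℝ) < α/2) (le_max_right _ _)

lemma auxψ_mono_n {α : ℝ} : Monotone fun n => auxψ n α := by
  intro i j hij
  have hi : (0:ℝ) < (i:ℝ) + 1 := by positivity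
  have hij' : (i:ℝ) + 1 ≤ (j:ℝ) + 1 := by
    have : (i:ℝ) ≤ j := Nat.cast_le.2 hij
    linarith
  have := one_div_le_one_div_of_le hi hij'
  exact max_le_max (by linarith) le_rfl

lemma auxψ_mono_α (n : ℕ) : Monotone (auxψ n) := fun a b hab =>
  max_le_max (by linarith) (by linarith)

lemma infDist_cut_min_mono (hu : IsFSN u) (x : EuclideanSpace ℝ (Fin m)) :
    Monotone fun β => infDist x (cut u (min β 1)) := by
  intro b1 b2 h
  exact infDist_le_infDist_of_subset
    (cut_anti (min_le_min_right 1 h)) (cut_nonempty hu (min_le_right _ _))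

lemma auxG_meas (hu : IsFSN u) (e : ℕ → EuclideanSpace ℝ (Fin m)) (n : ℕ) :
    Measurable (auxG u e n) := by
  refine Measurable.max ?_ measurable_const
  refine Measurable.iSup fun k => Measurable.sub ?_ ?_
  · exact (infDist_cut_min_mono hu (e k)).measurable
  · exact ((infDist_cut_min_mono hu (e k)).comp (auxψ_mono_α n)).measurable

lemma auxG_nonneg (e : ℕ → EuclideanSpace ℝ (Fin m)) (n : ℕ) (α : ℝ) :
    0 ≤ auxG u e n α := le_max_right _ _

lemma auxG_le (hu : IsFSN u) (e : ℕ → EuclideanSpace ℝ (Fin m)) (n : ℕ) {α : ℝ}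
    (hα : α ∈ Ioc (0:ℝ) 1) :
    auxG u e n α ≤ hausdorffDist (cut u α) (cut u (auxψ n α)) := by
  have h1 : min α 1 = α := min_eq_left hα.2
  have h2 : min (auxψ n α) 1 = auxψ n α := min_eq_left ((auxψ_lt hα.1).le.trans hα.2)
  have hfin : EMetric.hausdorffEdist (cut u (auxψ n α)) (cut u α) ≠ ⊤ :=
    cut_edist_ne_top hu (auxψ_pos hα.1) ((auxψ_lt hα.1).le.trans hα.2) hα.1 hα.2
  refine max_le ?_ hausdorffDist_nonneg
  rw [show (⨆ k, (infDist (e k) (cut u (min α 1)) - infDist (e k) (cut u (min (auxψ n α) 1))))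
      = ⨆ k, (infDist (e k) (cut u α) - infDist (e k) (cut u (auxψ n α))) by rw [h1, h2]]
  exact ciSup_le_hd hfin e

lemma auxG_le_diam (hu : IsFSN u) (e : ℕ → EuclideanSpace ℝ (Fin m)) (n : ℕ) {α : ℝ}
    (hα : α ∈ Ioc (0:ℝ) 1) :
    auxG u e n α ≤ diam (closure {x | 0 < u x}) :=
  (auxG_le hu e n hα).trans
    (cut_hd_le_diam hu hα.1 hα.2 (auxψ_pos hα.1) ((auxψ_lt hα.1).le.trans hα.2))

lemma auxG_ge (hu : IsFSN u) {e : ℕ → EuclideanSpace ℝ (Fin m)} (he : DenseRange e) (n : ℕ)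
    {α h : ℝ} (hα : α ∈ Ioc (0:ℝ) 1) (hh0 : 0 ≤ h) (hh1 : h ≤ 1/(n+1)) (hh2 : 2*h ≤ α) :
    hausdorffDist (cut u α) (cut u (α - h)) ≤ auxG u e n α := by
  have hαh : 0 < α - h := by linarith [hα.1]
  have hαh1 : α - h ≤ 1 := by linarith [hα.2]
  have hψαh : auxψ n α ≤ α - h := max_le (by linarith) (by linarith)
  have h1 : min α 1 = α := min_eq_left hα.2
  have h2 : min (auxψ n α) 1 = auxψ n α := min_eq_left ((auxψ_lt hα.1).le.trans hα.2)
  have hfinψ : EMetric.hausdorffEdist (cut u (auxψ n α)) (cut u α) ≠ ⊤ :=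
    cut_edist_ne_top hu (auxψ_pos hα.1) ((auxψ_lt hα.1).le.trans hα.2) hα.1 hα.2
  have hbddψ : BddAbove (Set.range fun k =>
      infDist (e k) (cut u α) - infDist (e k) (cut u (auxψ n α))) := by
    refine ⟨hausdorffDist (cut u (auxψ n α)) (cut u α), ?_⟩
    rintro _ ⟨k, rfl⟩
    have := infDist_le_infDist_add_hausdorffDist (x := e k) hfinψ
    dsimp only
    linarith
  refine le_trans (hd_le_ciSup (cut_nonempty hu hα.2)
    (cut_isCompact hu hαh).isBounded (cut_anti (by linarith)) he) ?_
  unfold auxG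
  rw [show (⨆ k, (infDist (e k) (cut u (min α 1)) - infDist (e k) (cut u (min (auxψ n α) 1))))
      = ⨆ k, (infDist (e k) (cut u α) - infDist (e k) (cut u (auxψ n α))) by rw [h1, h2]]
  refine max_le_max (ciSup_mono hbddψ fun k => ?_) le_rfl
  have : infDist (e k) (cut u (auxψ n α)) ≤ infDist (e k) (cut u (α - h)) :=
    infDist_le_infDist_of_subset (cut_anti hψαh) (cut_nonempty hu hαh1)
  linarith

lemma auxG_tendsto (hu : IsFSN u) (e : ℕ → EuclideanSpace ℝ (Fin m)) {α : ℝ}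
    (hα : α ∈ Ioc (0:ℝ) 1) :
    Tendsto (fun n => auxG u e n α) atTop (nhds 0) := by
  apply squeeze_zero (fun n => auxG_nonneg e n α) (fun n => auxG_le hu e n hα)
  rw [Metric.tendsto_atTop]
  intro ε hε
  obtain ⟨b, hb0, hba, hbd⟩ := cut_left_cont hu hα.1 hα.2 hε
  obtain ⟨N, hN⟩ := exists_nat_one_div_lt (by linarith : (0:ℝ) < α - b)
  refine ⟨N, fun n hn => ?_⟩
  have hψb : b ≤ auxψ n α := by
    have h1 : 1/((n:ℝ)+1) ≤ 1/((N:ℝ)+1) := by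
      apply one_div_le_one_div_of_le (by positivity)
      have : (N:ℝ) ≤ n := Nat.cast_le.2 hn
      linarith
    have : α - 1/((n:ℝ)+1) ≥ b := by linarith
    exact le_trans this (le_max_left _ _)
  have hle : hausdorffDist (cut u α) (cut u (auxψ n α)) ≤ hausdorffDist (cut u α) (cut u b) :=
    hd_cut_mono hu hb0 hψb (auxψ_lt hα.1).le hα.2
  rw [Real.dist_eq, sub_zero, abs_of_nonneg hausdorffDist_nonneg]
  linarith

end AuxG

/-- The `L_p` distance between fuzzy sets via Hausdorff distance of level cuts. -/
noncomputable def dp {m : ℕ} (p : ℝ) (u v : EuclideanSpace ℝ (Fin m) → ℝ) : ℝ :=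
  (∫ α in Set.Ioc (0:ℝ) 1, hausdorffDist (cut u α) (cut v α) ^ p) ^ (1/p)

theorem p_mean_left_continuous {m : ℕ} (p : ℝ) (hp : 1 ≤ p)
    (u : EuclideanSpace ℝ (Fin m) → ℝ) (hu : IsFSN u) :
    ∀ ε > (0:ℝ), ∃ δ > (0:ℝ), ∀ h : ℝ, 0 ≤ h → h < δ →
      (∫ α in Set.Ioc h 1, hausdorffDist (cut u α) (cut u (α - h)) ^ p) ^ (1/p) < ε := by
  intro ε hε
  obtain ⟨e, he⟩ := TopologicalSpace.exists_dense_seq (EuclideanSpace ℝ (Fin m))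
  have hp0 : (0:ℝ) < p := lt_of_lt_of_le one_pos hp
  set c : ℝ := diam (closure {x | 0 < u x}) with hc
  have hc0 : 0 ≤ c := diam_nonneg
  have hcp0 : 0 ≤ c ^ p := Real.rpow_nonneg hc0 p
  have hεp : 0 < ε ^ p := Real.rpow_pos_of_pos hε p
  -- integrability of the majorants
  have hGmeas : ∀ n : ℕ, Measurable fun α => auxG u e n α ^ p := fun n =>
    (Real.continuous_rpow_const hp0.le).measurable.comp (auxG_meas hu e n)
  have hGbd : ∀ n : ℕ, ∀ᵐ α ∂(volume.restrict (Ioc (0:ℝ) 1)), ‖auxG u e n α ^ p‖ ≤ c ^ p := by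
    intro n
    filter_upwards [ae_restrict_mem measurableSet_Ioc] with α hα
    rw [Real.norm_eq_abs, abs_of_nonneg (Real.rpow_nonneg (auxG_nonneg e n α) p)]
    exact Real.rpow_le_rpow (auxG_nonneg e n α) (auxG_le_diam hu e n hα) hp0.le
  have hGint : ∀ n : ℕ, IntegrableOn (fun α => auxG u e n α ^ p) (Ioc (0:ℝ) 1) := fun n =>
    Integrable.mono' (integrableOn_const measure_Ioc_lt_top.ne)
      (hGmeas n).aestronglyMeasurable (hGbd n)
  -- dominated convergence
  have htend : Tendsto (fun n => ∫ α in Ioc (0:ℝ) 1, auxG u e n α ^ p) atTop (nhds 0) := by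
    have := tendsto_integral_of_dominated_convergence (μ := volume.restrict (Ioc (0:ℝ) 1))
      (F := fun n α => auxG u e n α ^ p) (f := fun _ => 0) (fun _ => c ^ p)
      (fun n => (hGmeas n).aestronglyMeasurable)
      (integrableOn_const measure_Ioc_lt_top.ne) hGbd ?_
    · simpa using this
    · filter_upwards [ae_restrict_mem measurableSet_Ioc] with α hα
      have h0 : (0:ℝ) = 0 ^ p := (Real.zero_rpow hp0.ne').symm
      rw [h0]
      exact (auxG_tendsto hu e hα).rpow_const (Or.inr hp0.le)
  obtain ⟨N, hN⟩ := (htend.eventually_lt_const (by positivity : (0:ℝ) < ε ^ p / 2)).exists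
  refine ⟨min (1/(N+1)) (ε^p / (2*(c^p+1))), by positivity, fun h hh0 hhδ => ?_⟩
  have hh1 : h < 1/((N:ℝ)+1) := lt_of_lt_of_le hhδ (min_le_left _ _)
  have hh2 : h < ε^p / (2*(c^p+1)) := lt_of_lt_of_le hhδ (min_le_right _ _)
  have hIoc : Ioc h 1 ⊆ Ioc (0:ℝ) 1 := Ioc_subset_Ioc_left hh0
  -- main integral estimate
  have hint_lt : (∫ α in Ioc h 1, hausdorffDist (cut u α) (cut u (α - h)) ^ p) < ε ^ p := by
    by_cases hInt : IntegrableOn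
        (fun α => hausdorffDist (cut u α) (cut u (α - h)) ^ p) (Ioc h 1)
    · have hIndInt : IntegrableOn
          (fun α => (Ioc h (2*h)).indicator (fun _ => c ^ p) α) (Ioc h 1) := by
        apply Integrable.indicator _ measurableSet_Ioc
        exact integrableOn_const measure_Ioc_lt_top.ne
      have hGint' : IntegrableOn (fun α => auxG u e N α ^ p) (Ioc h 1) :=
        (hGint N).mono_set hIoc
      have hBint : IntegrableOn
          (fun α => (Ioc h (2*h)).indicator (fun _ => c ^ p) α + auxG u e N α ^ p)
          (Ioc h 1) := hIndInt.add hGint'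
      have hmono : ∀ α ∈ Ioc h 1,
          hausdorffDist (cut u α) (cut u (α - h)) ^ p
            ≤ (Ioc h (2*h)).indicator (fun _ => c ^ p) α + auxG u e N α ^ p := by
        intro α hα
        have hα01 : α ∈ Ioc (0:ℝ) 1 := hIoc hα
        have hαh : 0 < α - h := by
          have := hα.1; linarith
        rcases le_or_gt α (2*h) with hle | hlt
        · have hfle : hausdorffDist (cut u α) (cut u (α - h)) ≤ c :=
            cut_hd_le_diam hu hα01.1 hα01.2 hαh (by linarith [hα01.2])
          have h1 : hausdorffDist (cut u α) (cut u (α - h)) ^ p ≤ c ^ p :=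
            Real.rpow_le_rpow hausdorffDist_nonneg hfle hp0.le
          rw [Set.indicator_of_mem (show α ∈ Ioc h (2*h) from ⟨hα.1, hle⟩)]
          have := Real.rpow_nonneg (auxG_nonneg (u := u) e N α) p
          linarith
        · have hge : hausdorffDist (cut u α) (cut u (α - h)) ≤ auxG u e N α :=
            auxG_ge hu he N hα01 hh0 hh1.le (by linarith)
          have h1 : hausdorffDist (cut u α) (cut u (α - h)) ^ p ≤ auxG u e N α ^ p :=
            Real.rpow_le_rpow hausdorffDist_nonneg hge hp0.le
          have h2 : (0:ℝ) ≤ (Ioc h (2*h)).indicator (fun _ => c ^ p) α :=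
            Set.indicator_nonneg (fun _ _ => hcp0) α
          linarith
      have hsplit : (∫ α in Ioc h 1, hausdorffDist (cut u α) (cut u (α - h)) ^ p)
          ≤ (∫ α in Ioc h 1, (Ioc h (2*h)).indicator (fun _ => c ^ p) α)
            + ∫ α in Ioc h 1, auxG u e N α ^ p := by
        rw [← integral_add hIndInt hGint']
        exact setIntegral_mono_on hInt hBint measurableSet_Ioc hmono
      have hind_le : (∫ α in Ioc h 1, (Ioc h (2*h)).indicator (fun _ => c ^ p) α)
          ≤ c ^ p * h := by
        have hglob : Integrable ((Ioc h (2*h)).indicator fun _ => c ^ p) volume :=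
          (integrable_indicator_iff measurableSet_Ioc).2
            (integrableOn_const measure_Ioc_lt_top.ne)
        have h1 := setIntegral_le_integral (s := Ioc h 1) hglob
          (Filter.Eventually.of_forall (Set.indicator_nonneg fun _ _ => hcp0))
        have h2 : (∫ x, (Ioc h (2*h)).indicator (fun _ => c ^ p) x) = h * c ^ p := by
          rw [integral_indicator measurableSet_Ioc, setIntegral_const, Real.volume_real_Ioc,
            show 2*h - h = h by ring, max_eq_left hh0, smul_eq_mul]
        rw [h2] at h1
        exact h1.trans_eq (mul_comm _ _)
      have hG_le : (∫ α in Ioc h 1, auxG u e N α ^ p) ≤ ∫ α in Ioc (0:ℝ) 1, auxG u e N α ^ p :=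
        setIntegral_mono_set (hGint N)
          (Filter.Eventually.of_forall fun α => Real.rpow_nonneg (auxG_nonneg e N α) p)
          (HasSubset.Subset.eventuallyLE hIoc)
      have hch : c ^ p * h ≤ ε ^ p / 2 := by
        have hfrac : c ^ p * (ε ^ p / (2 * (c ^ p + 1))) ≤ ε ^ p / 2 := by
          rw [mul_div_assoc', div_le_div_iff₀ (by positivity) (by positivity)]
          nlinarith
        have := mul_le_mul_of_nonneg_left hh2.le hcp0
        linarith
      linarith [hsplit, hind_le, hG_le, hN]
    · rw [integral_undef hInt]
      exact hεp
  -- conclude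
  have h0 : 0 ≤ ∫ α in Ioc h 1, hausdorffDist (cut u α) (cut u (α - h)) ^ p :=
    integral_nonneg fun α => Real.rpow_nonneg hausdorffDist_nonneg p
  calc (∫ α in Ioc h 1, hausdorffDist (cut u α) (cut u (α - h)) ^ p) ^ (1/p)
      < (ε ^ p) ^ (1/p) := Real.rpow_lt_rpow h0 hint_lt (by positivity)
    _ = ε := by
        rw [← Real.rpow_mul hε.le, mul_one_div, div_self hp0.ne', Real.rpow_one]
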